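/- Let q be a ℂ-dual quaternion with (I·1 + 𝐢)·q = 0. Write the coordinates of q in the basis 1, 𝐢, 𝐣, 𝐤, ε, ε𝐢, ε𝐣, ε𝐤. Suppose the coefficient of 1 is zero, the coefficient of ε is zero, the coefficient of 𝐣 is nonzero, and x₀ ∈ ℂ satisfies x₀·(coefficient of 𝐣 of q) = (coefficient of ε𝐣 of q). Then there exists a ∈ ℂ, a ≠ 0, such that q = a·(1 + x₀·ε)·(𝐣 + I·𝐤). -/

import Mathlib

open Quaternion TrivSqZeroExt DualNumber

noncomputable section

/-- The ℂ-dual quaternions. -/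
abbrev DQ : Type := DualNumber (Quaternion ℂ)

/-- The quaternion unit 𝐢, viewed as a dual quaternion. -/
def qi : DQ := inl (⟨0,1,0,0⟩ : ℍ[ℂ])
/-- The quaternion unit 𝐣, viewed as a dual quaternion. -/
def qj : DQ := inl (⟨0,0,1,0⟩ : ℍ[ℂ])
/-- The quaternion unit 𝐤, viewed as a dual quaternion. -/
def qk : DQ := inl (⟨0,0,0,1⟩ : ℍ[ℂ])

/-- A complex scalar, viewed as a dual quaternion. -/
def cs (a : ℂ) : DQ := inl (algebraMap ℂ ℍ[ℂ] a)

lemma fst_qi_re : (fst qi).re = 0 := rfl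
lemma fst_qi_imI : (fst qi).imI = 1 := rfl
lemma fst_qi_imJ : (fst qi).imJ = 0 := rfl
lemma fst_qi_imK : (fst qi).imK = 0 := rfl
lemma snd_qi_eq : snd qi = 0 := rfl
lemma fst_qj_re : (fst qj).re = 0 := rfl
lemma fst_qj_imI : (fst qj).imI = 0 := rfl
lemma fst_qj_imJ : (fst qj).imJ = 1 := rfl
lemma fst_qj_imK : (fst qj).imK = 0 := rfl
lemma snd_qj_eq : snd qj = 0 := rfl
lemma fst_qk_re : (fst qk).re = 0 := rfl
lemma fst_qk_imI : (fst qk).imI = 0 := rfl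
lemma fst_qk_imJ : (fst qk).imJ = 0 := rfl
lemma fst_qk_imK : (fst qk).imK = 1 := rfl
lemma snd_qk_eq : snd qk = 0 := rfl

/-- If `(I + 𝐢)q = 0`, the coefficients of `1` and `ε` in `q` vanish, the coefficient
of `𝐣` is nonzero, and `x₀ · (coefficient of 𝐣) = coefficient of ε𝐣`, then
`q = a(1 + x₀ε)(𝐣 + I𝐤)` for some nonzero `a ∈ ℂ`. -/
theorem normal_form_of_bond_factor (q : DQ) (x₀ : ℂ)
    (hq : (cs Complex.I + qi) * q = 0)
    (h1 : (fst q).re = 0)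
    (heps : (snd q).re = 0)
    (hj : (fst q).imJ ≠ 0)
    (hx : x₀ * (fst q).imJ = (snd q).imJ) :
    ∃ a : ℂ, a ≠ 0 ∧ q = cs a * (1 + cs x₀ * ε) * (qj + cs Complex.I * qk) := by
  have hf := congrArg fst hq
  have hs := congrArg snd hq
  simp only [fst_mul, DualNumber.snd_mul, fst_add, snd_add, cs, fst_inl, snd_inl,
    snd_qi_eq, snd_qj_eq, snd_qk_eq, fst_zero, snd_zero, add_zero, zero_mul, zero_add, mul_zero] at hf hs
  rw [Quaternion.ext_iff] at hf hs
  simp only [Quaternion.re_add, Quaternion.imI_add, Quaternion.imJ_add, Quaternion.imK_add,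
    Quaternion.re_mul, Quaternion.imI_mul, Quaternion.imJ_mul, Quaternion.imK_mul,
    Quaternion.algebraMap_def, Quaternion.re_coe, Quaternion.imI_coe, Quaternion.imJ_coe,
    Quaternion.imK_coe, Quaternion.re_zero, Quaternion.imI_zero, Quaternion.imJ_zero,
    Quaternion.imK_zero, fst_qi_re, fst_qi_imI, fst_qi_imJ, fst_qi_imK, fst_qj_re, fst_qj_imI, fst_qj_imJ, fst_qj_imK, fst_qk_re, fst_qk_imI, fst_qk_imJ, fst_qk_imK] at hf hs
  refine ⟨(fst q).imJ, hj, ?_⟩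
  obtain ⟨hf1, hf2, hf3, hf4⟩ := hf
  obtain ⟨hs1, hs2, hs3, hs4⟩ := hs
  refine TrivSqZeroExt.ext ?_ ?_
  all_goals simp only [fst_mul, DualNumber.snd_mul, fst_add, snd_add, cs, fst_inl,
    snd_inl, snd_qi_eq, snd_qj_eq, snd_qk_eq, fst_one, snd_one, fst_eps, snd_eps, mul_zero, zero_mul, add_zero, zero_add,
    mul_one, one_mul]
  all_goals ext
  all_goals simp only [Quaternion.re_add, Quaternion.imI_add, Quaternion.imJ_add,
    Quaternion.imK_add, Quaternion.re_mul, Quaternion.imI_mul, Quaternion.imJ_mul,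
    Quaternion.imK_mul, Quaternion.algebraMap_def, Quaternion.re_coe, Quaternion.imI_coe,
    Quaternion.imJ_coe, Quaternion.imK_coe, fst_qi_re, fst_qi_imI, fst_qi_imJ, fst_qi_imK, fst_qj_re, fst_qj_imI, fst_qj_imJ, fst_qj_imK, fst_qk_re, fst_qk_imI, fst_qk_imJ, fst_qk_imK]
  all_goals
    first
    | ring1
    | linear_combination h1
    | linear_combination Complex.I * h1 - hf1
    | linear_combination -hf3
    | linear_combination heps
    | linear_combination Complex.I * heps - hs1
    | linear_combination hx
    | linear_combination -hx
    | linear_combination -hs3 - Complex.I * hx
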